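/- Let φ be analytic on an annulus r < |ζ| < R with r < 1 < R and strictly positive on the unit circle, and let L be the analytic logarithm of φ on an annulus around the unit circle that is real on the unit circle. For z ∈ ℂ with |z| < 1 define L_z(ζ) = L(ζ) + Log(1 − z/ζ) (principal branch), which is analytic on an annulus around the unit circle. Then (L_z)_0 = L_0, and the series ∑_{k=1}^∞ k·[ (L_z)_k·(L_z)_{−k} − L_k·L_{−k} ] converges absolutely with sum equal to −∑_{k=1}^∞ L_k·z^k. -/

import Mathlib

/-- The `k`-th Fourier coefficient of a function on the unit circle:
`h_k = ∫_{|ζ|=1} ζ^{−k} h(ζ) dζ/(2πiζ) = (1/2π)∫_0^{2π} e^{−ikθ} h(e^{iθ}) dθ`. -/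
noncomputable def fourierCoeff' (h : ℂ → ℂ) (k : ℤ) : ℂ :=
  (1 / (2 * Real.pi)) *
    ∫ θ in (0 : ℝ)..(2 * Real.pi),
      Complex.exp (-(Complex.I * k * θ)) * h (Complex.exp (Complex.I * θ))

open Complex intervalIntegral Real in
lemma integral_exp_int' (n : ℤ) :
    (∫ θ in (0:ℝ)..(2*Real.pi), Complex.exp ((n:ℂ) * Complex.I * θ)) =
      if n = 0 then (((2*Real.pi : ℝ)) : ℂ) else 0 := by
  rcases eq_or_ne n 0 with rfl | hn
  · simp
  · have hc : (n:ℂ) * Complex.I ≠ 0 :=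
      mul_ne_zero (by exact_mod_cast Int.cast_ne_zero.mpr hn) Complex.I_ne_zero
    rw [if_neg hn, integral_exp_mul_complex hc]
    have h1 : (n:ℂ) * Complex.I * ((2*Real.pi : ℝ) : ℂ) = (n:ℤ) * (2 * Real.pi * Complex.I) := by
      push_cast; ring
    rw [h1, Complex.exp_int_mul_two_pi_mul_I]
    simp

open Complex in
lemma abs_exp_I_mul (θ : ℝ) : ‖Complex.exp (Complex.I * θ)‖ = 1 := by
  simp [Complex.norm_exp]

open Complex in
lemma hasSum_coeffg_integral (z : ℂ) (hz : ‖z‖ < 1) (k : ℤ) :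
    HasSum (fun m : ℕ => (-(z^(m+1)) / ((m:ℂ)+1)) *
        (if k + ((m:ℤ)+1) = 0 then (((2*Real.pi : ℝ)) : ℂ) else 0))
      (∫ θ in (0:ℝ)..(2*Real.pi),
        Complex.exp (-(Complex.I * k * θ)) * Complex.log (1 - z / Complex.exp (Complex.I * θ))) := by
  set F : ℕ → ℝ → ℂ := fun m θ =>
    Complex.exp (-(Complex.I * k * θ)) *
      (-((z * Complex.exp (-(Complex.I * θ)))^(m+1)) / ((m:ℂ)+1)) with hF
  have habsw : ∀ θ : ℝ, ‖z * Complex.exp (-(Complex.I * θ))‖ = ‖z‖ := by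
    intro θ
    simp [map_mul, Complex.norm_exp]
  have hlim : ∀ θ : ℝ, HasSum (fun m => F m θ)
      (Complex.exp (-(Complex.I * k * θ)) * Complex.log (1 - z / Complex.exp (Complex.I * θ))) := by
    intro θ
    set w := z * Complex.exp (-(Complex.I * θ)) with hw
    have hwlt : ‖w‖ < 1 := by rw [hw, habsw θ]; exact hz
    have h0 := (Complex.hasSum_taylorSeries_neg_log hwlt).neg
    simp only [neg_neg] at h0
    have h1 : HasSum (fun m : ℕ => -(w^(m+1) / ((m+1 : ℕ) : ℂ))) (Complex.log (1 - w)) := by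
      refine (hasSum_nat_add_iff (f := fun n : ℕ => -(w^n / (n : ℂ))) 1).mpr ?_
      simpa using h0
    have h2 := h1.mul_left (Complex.exp (-(Complex.I * k * θ)))
    have hdz : z / Complex.exp (Complex.I * θ) = w := by
      rw [hw, div_eq_mul_inv, ← Complex.exp_neg]
    rw [hdz]
    convert h2 using 2 with m
    case e'_3 => rfl
    push_cast
    ring
  have key := intervalIntegral.hasSum_integral_of_dominated_convergence
      (F := F) (μ := MeasureTheory.volume) (a := (0:ℝ)) (b := 2*Real.pi)
      (bound := fun m _ => ‖z‖^(m+1))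
      (fun m => by
        have : Continuous (F m) := by
          apply Continuous.mul
          · exact Complex.continuous_exp.comp (by fun_prop)
          · apply Continuous.div_const
            apply Continuous.neg
            apply Continuous.pow
            exact continuous_const.mul (Complex.continuous_exp.comp (by fun_prop))
        exact this.aestronglyMeasurable)
      (fun m => MeasureTheory.ae_of_all _ (fun θ _ => by
        rw [hF]
        have h1 : ‖Complex.exp (-(Complex.I * k * θ))‖ = 1 := by
          simp [Complex.norm_exp]
        have h2 : ‖z * Complex.exp (-(Complex.I * θ))‖ = ‖z‖ := habsw θ
        have h3 : ‖((m:ℂ)+1)‖ = (m:ℝ)+1 := by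
          rw [show ((m:ℂ)+1) = ((m+1 : ℕ) : ℂ) by push_cast; ring, Complex.norm_natCast]
          push_cast; ring
        rw [norm_mul, norm_div, norm_neg, norm_pow, h1, h2, h3, one_mul]
        apply div_le_self (pow_nonneg (norm_nonneg z) _)
        exact_mod_cast Nat.one_le_iff_ne_zero.mpr (Nat.succ_ne_zero m)))
      (MeasureTheory.ae_of_all _ (fun θ _ => by
        have := (summable_geometric_of_lt_one (norm_nonneg z) hz).mul_right ‖z‖
        simpa [pow_succ] using this))
      (by apply intervalIntegrable_const)
      (MeasureTheory.ae_of_all _ (fun θ _ => hlim θ))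
  convert key using 2 with m
  case e'_3 => rfl
  have hFeq : ∀ θ : ℝ, F m θ =
      (-(z^(m+1)) / ((m:ℂ)+1)) * Complex.exp (((-(k + ((m:ℤ)+1)) : ℤ) : ℂ) * Complex.I * θ) := by
    intro θ
    rw [hF]
    have harg : Complex.exp (-(Complex.I * θ)) ^ (m+1) =
        Complex.exp (((m+1 : ℕ) : ℂ) * (-(Complex.I * θ))) := by
      rw [Complex.exp_nat_mul]
    simp only []
    rw [mul_pow, harg, show Complex.exp (-(Complex.I * (k:ℂ) * θ)) *
        (-(z ^ (m + 1) * Complex.exp (((m+1 : ℕ) : ℂ) * (-(Complex.I * θ)))) / ((m:ℂ) + 1)) =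
        (-(z^(m+1)) / ((m:ℂ)+1)) * (Complex.exp (-(Complex.I * (k:ℂ) * θ)) *
          Complex.exp (((m+1 : ℕ) : ℂ) * (-(Complex.I * θ)))) by ring,
      ← Complex.exp_add]
    congr 2
    push_cast
    ring
  rw [intervalIntegral.integral_congr (g := fun θ =>
      (-(z^(m+1)) / ((m:ℂ)+1)) * Complex.exp (((-(k + ((m:ℤ)+1)) : ℤ) : ℂ) * Complex.I * θ))
      (fun θ _ => hFeq θ),
    intervalIntegral.integral_const_mul, integral_exp_int']
  congr 1
  simp only [neg_eq_zero]

open Complex in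
lemma coeffg_nonneg (z : ℂ) (hz : ‖z‖ < 1) (k : ℤ) (hk : 0 ≤ k) :
    fourierCoeff' (fun ζ => Complex.log (1 - z / ζ)) k = 0 := by
  have h := hasSum_coeffg_integral z hz k
  have h0 : (fun m : ℕ => (-(z^(m+1)) / ((m:ℂ)+1)) *
      (if k + ((m:ℤ)+1) = 0 then (((2*Real.pi : ℝ)) : ℂ) else 0)) = fun _ => (0:ℂ) := by
    funext m
    rw [if_neg (by omega), mul_zero]
  rw [h0] at h
  have h1 := h.unique hasSum_zero
  unfold fourierCoeff'
  beta_reduce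
  rw [h1, mul_zero]

open Complex in
lemma coeffg_neg (z : ℂ) (hz : ‖z‖ < 1) (n : ℕ) :
    fourierCoeff' (fun ζ => Complex.log (1 - z / ζ)) (-((n:ℤ)+1)) =
      -(z^(n+1)) / ((n:ℂ)+1) := by
  have h := hasSum_coeffg_integral z hz (-((n:ℤ)+1))
  have h0 : (fun m : ℕ => (-(z^(m+1)) / ((m:ℂ)+1)) *
      (if -((n:ℤ)+1) + ((m:ℤ)+1) = 0 then (((2*Real.pi : ℝ)) : ℂ) else 0)) =
      (fun m : ℕ => if m = n then (-(z^(n+1)) / ((n:ℂ)+1)) * (((2*Real.pi : ℝ)) : ℂ) else 0) := by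
    funext m
    by_cases hm : m = n
    · subst hm; rw [if_pos (by omega), if_pos rfl]
    · rw [if_neg (by omega), if_neg hm, mul_zero]
  rw [h0] at h
  have h2 := h.unique (hasSum_ite_eq n _)
  unfold fourierCoeff'
  beta_reduce
  rw [h2]
  have hπ : (Real.pi : ℂ) ≠ 0 := by exact_mod_cast Real.pi_ne_zero
  have hn : ((n:ℂ)+1) ≠ 0 := Nat.cast_add_one_ne_zero n
  rw [Complex.ofReal_mul]
  push_cast
  field_simp

open Complex in
lemma coeff_add' (L g : ℂ → ℂ)
    (hL : Continuous fun θ : ℝ => L (Complex.exp (Complex.I * θ)))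
    (hg : Continuous fun θ : ℝ => g (Complex.exp (Complex.I * θ))) (k : ℤ) :
    fourierCoeff' (fun ζ => L ζ + g ζ) k = fourierCoeff' L k + fourierCoeff' g k := by
  unfold fourierCoeff'
  have hc : Continuous fun θ : ℝ => Complex.exp (-(Complex.I * k * θ)) :=
    Complex.continuous_exp.comp (by fun_prop)
  have i1 : IntervalIntegrable (fun θ : ℝ => Complex.exp (-(Complex.I * k * θ)) *
      L (Complex.exp (Complex.I * θ))) MeasureTheory.volume 0 (2*Real.pi) :=
    (hc.mul hL).intervalIntegrable _ _
  have i2 : IntervalIntegrable (fun θ : ℝ => Complex.exp (-(Complex.I * k * θ)) *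
      g (Complex.exp (Complex.I * θ))) MeasureTheory.volume 0 (2*Real.pi) :=
    (hc.mul hg).intervalIntegrable _ _
  rw [← mul_add, ← intervalIntegral.integral_add i1 i2]
  congr 1
  apply intervalIntegral.integral_congr
  intro θ _
  simp [mul_add]

open Complex in
lemma coeff_bound' (h : ℂ → ℂ) (M : ℝ)
    (hM : ∀ θ ∈ Set.Icc (0:ℝ) (2*Real.pi), ‖h (Complex.exp (Complex.I * θ))‖ ≤ M) (k : ℤ) :
    ‖fourierCoeff' h k‖ ≤ M := by
  unfold fourierCoeff'
  have hb : ∀ θ ∈ Set.uIoc (0:ℝ) (2*Real.pi),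
      ‖Complex.exp (-(Complex.I * k * θ)) * h (Complex.exp (Complex.I * θ))‖ ≤ M := by
    intro θ hθ
    rw [Set.uIoc_of_le (by positivity)] at hθ
    have h1 : ‖Complex.exp (-(Complex.I * k * θ))‖ = 1 := by
      simp [Complex.norm_exp]
    rw [norm_mul, h1, one_mul]
    exact hM θ ⟨le_of_lt hθ.1, hθ.2⟩
  have h2 := intervalIntegral.norm_integral_le_of_norm_le_const (C := M) (fun θ hθ => hb θ hθ)
  rw [norm_mul]
  have h3 : ‖(1 / (2 * (Real.pi : ℂ)))‖ = 1 / (2 * Real.pi) := by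
    simp [abs_of_pos Real.pi_pos]
  calc ‖(1 / (2 * (Real.pi : ℂ)))‖ * ‖∫ θ in (0:ℝ)..(2*Real.pi),
        Complex.exp (-(Complex.I * k * θ)) * h (Complex.exp (Complex.I * θ))‖
      ≤ (1 / (2 * Real.pi)) * (M * |2*Real.pi - 0|) := by
        rw [h3]; exact mul_le_mul_of_nonneg_left h2 (by positivity)
    _ = M := by
        rw [sub_zero, abs_of_pos Real.two_pi_pos]
        field_simp

set_option maxHeartbeats 1000000 in
/-- for `φ` analytic and strictly positive on the unit circle with real
analytic logarithm `L`, and `L_z(ζ) = L(ζ) + Log(1 − z/ζ)` with `|z| < 1`: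
`(L_z)_0 = L_0`, and `∑_{k≥1} k·[(L_z)_k(L_z)_{−k} − L_k L_{−k}]` converges absolutely with
sum `−∑_{k≥1} L_k z^k`. -/
theorem log_coefficient_identity (r R : ℝ) (hrR : r < R) (φ L : ℂ → ℂ)
    (hr : r < 1) (hR : 1 < R)
    (hφ : DifferentiableOn ℂ φ {ζ : ℂ | r < ‖ζ‖ ∧ ‖ζ‖ < R})
    (hφpos : ∀ θ : ℝ, 0 < (φ (Complex.exp (Complex.I * θ))).re ∧
      (φ (Complex.exp (Complex.I * θ))).im = 0)
    (r' R' : ℝ) (h1 : r ≤ r') (h2 : r' < 1) (h3 : 1 < R') (h4 : R' ≤ R)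
    (hL : DifferentiableOn ℂ L {ζ : ℂ | r' < ‖ζ‖ ∧ ‖ζ‖ < R'})
    (hLφ : ∀ ζ : ℂ, r' < ‖ζ‖ → ‖ζ‖ < R' → Complex.exp (L ζ) = φ ζ)
    (hLreal : ∀ θ : ℝ, (L (Complex.exp (Complex.I * θ))).im = 0)
    (z : ℂ) (hz : ‖z‖ < 1) :
    fourierCoeff' (fun ζ => L ζ + Complex.log (1 - z / ζ)) 0 = fourierCoeff' L 0 ∧
    Summable (fun k : ℕ =>
      ‖((k : ℂ) + 1) *
          (fourierCoeff' (fun ζ => L ζ + Complex.log (1 - z / ζ)) ((k : ℤ) + 1) *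
              fourierCoeff' (fun ζ => L ζ + Complex.log (1 - z / ζ)) (-((k : ℤ) + 1)) -
            fourierCoeff' L ((k : ℤ) + 1) * fourierCoeff' L (-((k : ℤ) + 1)))‖) ∧
    (∑' k : ℕ,
        ((k : ℂ) + 1) *
          (fourierCoeff' (fun ζ => L ζ + Complex.log (1 - z / ζ)) ((k : ℤ) + 1) *
              fourierCoeff' (fun ζ => L ζ + Complex.log (1 - z / ζ)) (-((k : ℤ) + 1)) -
            fourierCoeff' L ((k : ℤ) + 1) * fourierCoeff' L (-((k : ℤ) + 1)))) =
      -∑' k : ℕ, fourierCoeff' L ((k : ℤ) + 1) * z ^ (k + 1) := by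
  -- continuity of L on the circle
  have hcirc : Continuous fun θ : ℝ => Complex.exp (Complex.I * θ) :=
    Complex.continuous_exp.comp (by fun_prop)
  have hLcont : Continuous fun θ : ℝ => L (Complex.exp (Complex.I * θ)) := by
    apply hL.continuousOn.comp_continuous hcirc
    intro θ
    have : ‖Complex.exp (Complex.I * θ)‖ = 1 := abs_exp_I_mul θ
    exact ⟨by rw [this]; exact h2, by rw [this]; exact h3⟩
  -- continuity of the log term on the circle
  have hgcont : Continuous fun θ : ℝ =>
      Complex.log (1 - z / Complex.exp (Complex.I * θ)) := by
    rw [continuous_iff_continuousAt]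
    intro θ
    have hinner : ContinuousAt (fun θ : ℝ => 1 - z / Complex.exp (Complex.I * θ)) θ := by
      apply ContinuousAt.sub continuousAt_const
      exact ContinuousAt.div continuousAt_const hcirc.continuousAt (Complex.exp_ne_zero _)
    have hmem : (1 - z / Complex.exp (Complex.I * θ)) ∈ Complex.slitPlane := by
      have : ‖-(z / Complex.exp (Complex.I * θ))‖ < 1 := by
        rw [norm_neg, norm_div]
        have he : ‖Complex.exp (Complex.I * (θ:ℂ))‖ = 1 := by
          exact abs_exp_I_mul θ
        rw [he, div_one]
        exact hz
      have := Complex.mem_slitPlane_of_norm_lt_one this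
      simpa [sub_eq_add_neg] using this
    show ContinuousAt ((Complex.log) ∘ fun θ : ℝ => 1 - z / Complex.exp (Complex.I * θ)) θ
    exact ContinuousAt.comp (continuousAt_clog hmem) hinner
  -- Fourier coefficient splitting
  have hsplit : ∀ k : ℤ, fourierCoeff' (fun ζ => L ζ + Complex.log (1 - z / ζ)) k =
      fourierCoeff' L k + fourierCoeff' (fun ζ => Complex.log (1 - z / ζ)) k :=
    coeff_add' L (fun ζ => Complex.log (1 - z / ζ)) hLcont hgcont
  -- bound on coefficients of L
  obtain ⟨M, hM⟩ := (isCompact_Icc (a := (0:ℝ)) (b := 2*Real.pi)).exists_bound_of_continuousOn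
    hLcont.continuousOn
  have hMb : ∀ k : ℤ, ‖fourierCoeff' L k‖ ≤ M := fun k => coeff_bound' L M hM k
  have hM0 : 0 ≤ M := le_trans (norm_nonneg _) (hMb 0)
  -- key pointwise identity
  have key : ∀ k : ℕ,
      ((k : ℂ) + 1) *
          (fourierCoeff' (fun ζ => L ζ + Complex.log (1 - z / ζ)) ((k : ℤ) + 1) *
              fourierCoeff' (fun ζ => L ζ + Complex.log (1 - z / ζ)) (-((k : ℤ) + 1)) -
            fourierCoeff' L ((k : ℤ) + 1) * fourierCoeff' L (-((k : ℤ) + 1))) =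
      -(fourierCoeff' L ((k : ℤ) + 1) * z ^ (k + 1)) := by
    intro k
    rw [hsplit ((k : ℤ) + 1), hsplit (-((k : ℤ) + 1)),
      coeffg_nonneg z hz ((k : ℤ) + 1) (by omega), coeffg_neg z hz k]
    have hk : ((k : ℂ) + 1) ≠ 0 := Nat.cast_add_one_ne_zero k
    generalize fourierCoeff' L ((k:ℤ)+1) = A
    generalize fourierCoeff' L (-((k:ℤ)+1)) = B
    field_simp
    ring
  refine ⟨?_, ?_, ?_⟩
  · rw [hsplit 0, coeffg_nonneg z hz 0 le_rfl, add_zero]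
  · refine Summable.of_nonneg_of_le (f := fun k => M * ‖z‖^(k+1))
      (fun k => norm_nonneg _) (fun k => ?_) ?_
    · rw [key k, norm_neg, norm_mul, norm_pow]
      have hzn : ‖z‖ = ‖z‖ := rfl
      rw [hzn]
      exact mul_le_mul_of_nonneg_right (hMb _) (pow_nonneg (norm_nonneg z) _)
    · apply Summable.mul_left
      have := (summable_geometric_of_lt_one (norm_nonneg z) hz).mul_right ‖z‖
      simpa [pow_succ] using this
  · rw [tsum_congr key, tsum_neg]
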